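/- Let d ≥ 2 and let p_1, …, p_{d+1} ∈ ℝ^d satisfy Σ_{i=1}^{d+1} p_i = 0 and Σ_{i=1}^{d+1} |p_i| = d+1. Then (1/2)·max{ |Σ_{i=1}^{d+1} ε_i p_i| : ε_i ∈ {−1, 1} } ≥ √(d+2)/2 if d is even, and ≥ (d+1)/(2√d) if d is odd; equality holds if and only if all p_i are unit vectors with ⟨p_i, p_j⟩ = −1/d for all i ≠ j, i.e., the zonotope Σ_{i=1}^{d+1}[0, p_i] is a regular rhombic dodecahedron. -/

import Mathlib

open Finset


/-- The maximum of `‖∑ᵢ εᵢ • pᵢ‖` over all sign vectors `ε ∈ {-1, 1}ⁿ`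
(twice the circumradius of the zonotope `∑ᵢ [0, pᵢ]`). -/
noncomputable def signMax {d n : ℕ} (p : Fin n → EuclideanSpace ℝ (Fin d)) : ℝ :=
  sSup {r : ℝ | ∃ ε : Fin n → ℝ, (∀ i, ε i = 1 ∨ ε i = -1) ∧ r = ‖∑ i, ε i • p i‖}

section Aux
variable {α : Type*} [DecidableEq α]

lemma card_filter_supersets (s t : Finset α) (ht : t ⊆ s) {m : ℕ} (htm : t.card ≤ m) :
    ((s.powersetCard m).filter (fun S => t ⊆ S)).card
      = (s.card - t.card).choose (m - t.card) := by
  rw [show s.card - t.card = (s \ t).card from (Finset.card_sdiff_of_subset ht).symm,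
    ← Finset.card_powersetCard (m - t.card) (s \ t)]
  apply Finset.card_bij' (fun S _ => S \ t) (fun R _ => R ∪ t)
  · intro S hS
    simp only [mem_filter, mem_powersetCard] at hS
    obtain ⟨⟨hSs, hScard⟩, htS⟩ := hS
    rw [mem_powersetCard]
    exact ⟨sdiff_subset_sdiff hSs (subset_refl t), by rw [card_sdiff_of_subset htS, hScard]⟩
  · intro R hR
    rw [mem_powersetCard] at hR
    obtain ⟨hRs, hRcard⟩ := hR
    have hdisj : Disjoint R t := disjoint_of_subset_left hRs sdiff_disjoint
    simp only [mem_filter, mem_powersetCard]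
    refine ⟨⟨union_subset (hRs.trans (sdiff_subset)) ht, ?_⟩, subset_union_right⟩
    rw [card_union_of_disjoint hdisj, hRcard]
    omega
  · intro S hS
    simp only [mem_filter] at hS
    exact sdiff_union_of_subset hS.2
  · intro R hR
    rw [mem_powersetCard] at hR
    exact union_sdiff_cancel_right (disjoint_of_subset_left hR.1 sdiff_disjoint)

lemma card_filter_supersets_zero (s t : Finset α) {m : ℕ} (htm : m < t.card) :
    ((s.powersetCard m).filter (fun S => t ⊆ S)).card = 0 := by
  rw [Finset.card_eq_zero, Finset.filter_eq_empty_iff]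
  intro S hS hts
  rw [mem_powersetCard] at hS
  have := Finset.card_le_card hts
  omega

end Aux


section SignMax
variable {d : ℕ} (p : Fin (d + 1) → EuclideanSpace ℝ (Fin d))

lemma sum_signs_eq (hcenter : ∑ i, p i = 0) (S : Finset (Fin (d+1))) :
    ∑ i, (if i ∈ S then (-1:ℝ) else 1) • p i = (-2 : ℝ) • ∑ i ∈ S, p i := by
  have h1 : ∀ i : Fin (d+1), (if i ∈ S then (-1:ℝ) else 1) • p i
      = p i + (if i ∈ S then (-2:ℝ) • p i else 0) := by
    intro i
    by_cases h : i ∈ S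
    · simp only [h, if_true]
      module
    · simp [h]
  rw [Finset.sum_congr rfl (fun i _ => h1 i), Finset.sum_add_distrib, hcenter, zero_add,
    Finset.sum_ite_mem, univ_inter, Finset.smul_sum]

lemma signMax_eq (hcenter : ∑ i, p i = 0) :
    signMax p = sSup (Set.range fun S : Finset (Fin (d+1)) => 2 * ‖∑ i ∈ S, p i‖) := by
  unfold signMax
  congr 1
  ext r
  simp only [Set.mem_setOf_eq, Set.mem_range]
  constructor
  · rintro ⟨ε, hε, rfl⟩
    refine ⟨univ.filter (fun i => ε i = -1), ?_⟩
    have h2 : ∑ i, ε i • p i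
        = ∑ i, (if i ∈ univ.filter (fun i => ε i = -1) then (-1:ℝ) else 1) • p i := by
      refine Finset.sum_congr rfl fun i _ => ?_
      rcases hε i with h1 | h1 <;> norm_num [h1]
    rw [h2, sum_signs_eq p hcenter, norm_smul]
    norm_num
  · rintro ⟨S, rfl⟩
    refine ⟨fun i => if i ∈ S then (-1:ℝ) else 1, fun i => ?_, ?_⟩
    · by_cases h : i ∈ S <;> simp [h]
    · rw [sum_signs_eq p hcenter S, norm_smul]
      norm_num

lemma two_norm_le_signMax (hcenter : ∑ i, p i = 0) (S : Finset (Fin (d+1))) :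
    2 * ‖∑ i ∈ S, p i‖ ≤ signMax p := by
  rw [signMax_eq p hcenter]
  exact le_csSup ((Set.finite_range _).bddAbove) ⟨S, rfl⟩

end SignMax

section Slice
variable {d : ℕ} (p : Fin (d + 1) → EuclideanSpace ℝ (Fin d))

lemma norm_sq_sum_eq_double (S : Finset (Fin (d+1))) :
    ‖∑ i ∈ S, p i‖^2 = ∑ i ∈ S, ∑ j ∈ S, (inner ℝ (p i) (p j) : ℝ) := by
  rw [← real_inner_self_eq_norm_sq, sum_inner]
  exact Finset.sum_congr rfl fun i _ => inner_sum _ _ _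

lemma slice_sum (hcenter : ∑ i, p i = 0) {m : ℕ} (hm1 : 1 ≤ m) (hmd : m ≤ d) :
    ∑ S ∈ (univ : Finset (Fin (d+1))).powersetCard m, ‖∑ i ∈ S, p i‖^2
      = (Nat.choose (d-1) (m-1) : ℝ) * ∑ i, ‖p i‖^2 := by
  classical
  set c : Fin (d+1) → Fin (d+1) → ℝ := fun i j => (inner ℝ (p i) (p j) : ℝ) with hc
  set slice := (univ : Finset (Fin (d+1))).powersetCard m with hslice
  set A : ℕ := Nat.choose d (m-1) with hA
  set B : ℕ := if 2 ≤ m then Nat.choose (d-1) (m-2) else 0 with hB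
  -- counting
  have hcount : ∀ i j : Fin (d+1),
      (slice.filter fun S => i ∈ S ∧ j ∈ S).card = if i = j then A else B := by
    intro i j
    by_cases hij : i = j
    · subst hij
      rw [if_pos rfl]
      have hconv : (slice.filter fun S => i ∈ S ∧ i ∈ S)
          = slice.filter (fun S => ({i} : Finset (Fin (d+1))) ⊆ S) := by
        apply Finset.filter_congr
        intro S _
        simp
      rw [hconv, hslice, card_filter_supersets univ {i} (subset_univ _) (by simpa using hm1)]
      simp [hA, card_univ]
    · rw [if_neg hij]
      have hconv : (slice.filter fun S => i ∈ S ∧ j ∈ S)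
          = slice.filter (fun S => ({i, j} : Finset (Fin (d+1))) ⊆ S) := by
        apply Finset.filter_congr
        intro S _
        simp [Finset.insert_subset_iff]
      rw [hconv]
      have hcard2 : ({i, j} : Finset (Fin (d+1))).card = 2 := by
        rw [card_insert_of_notMem (by simpa using hij), card_singleton]
      by_cases h2 : 2 ≤ m
      · rw [hslice, card_filter_supersets univ {i,j} (subset_univ _) (by omega)]
        simp only [hB, if_pos h2, card_univ, Fintype.card_fin, hcard2]
        congr 1 <;> omega
      · rw [hslice, card_filter_supersets_zero univ {i,j} (by omega)]
        simp [hB, h2]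
  -- expand norms
  have expand : ∀ S ∈ slice, ‖∑ i ∈ S, p i‖^2
      = ∑ i, ∑ j, (if i ∈ S ∧ j ∈ S then c i j else 0) := by
    intro S _
    rw [norm_sq_sum_eq_double]
    have h1 : ∀ i, (∑ j, if i ∈ S ∧ j ∈ S then c i j else 0)
        = if i ∈ S then ∑ j ∈ S, c i j else 0 := by
      intro i
      by_cases h : i ∈ S
      · simp only [h, true_and, if_pos]
        rw [Finset.sum_ite_mem, univ_inter]
      · simp [h]
    rw [Finset.sum_congr rfl (fun i (_ : i ∈ univ) => h1 i), Finset.sum_ite_mem, univ_inter]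
  rw [Finset.sum_congr rfl expand]
  -- swap sums
  rw [Finset.sum_comm]
  rw [Finset.sum_congr rfl (fun i (_ : i ∈ univ) => Finset.sum_comm)]
  -- inner count
  have hinner : ∀ i j : Fin (d+1),
      (∑ S ∈ slice, if i ∈ S ∧ j ∈ S then c i j else 0)
        = ((if i = j then A else B : ℕ) : ℝ) * c i j := by
    intro i j
    rw [← Finset.sum_filter, Finset.sum_const, ← hcount i j, nsmul_eq_mul]
  rw [Finset.sum_congr rfl (fun i (_ : i ∈ univ) =>
    Finset.sum_congr rfl (fun j (_ : j ∈ univ) => hinner i j))]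
  -- split diagonal
  have hsplit : ∀ i : Fin (d+1),
      (∑ j, ((if i = j then A else B : ℕ) : ℝ) * c i j)
        = (A : ℝ) * c i i + (B:ℝ) * ∑ j ∈ univ.erase i, c i j := by
    intro i
    rw [← Finset.add_sum_erase _ _ (mem_univ i), if_pos rfl, Finset.mul_sum]
    congr 1
    refine Finset.sum_congr rfl fun j hj => ?_
    rw [if_neg (Finset.ne_of_mem_erase hj).symm]
  rw [Finset.sum_congr rfl (fun i (_ : i ∈ univ) => hsplit i), Finset.sum_add_distrib]
  have hcc : ∀ i, c i i = ‖p i‖^2 := fun i => real_inner_self_eq_norm_sq (p i)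
  have htotal : ∑ i, ∑ j ∈ univ.erase i, c i j = - ∑ i, ‖p i‖^2 := by
    have h0 : ∑ i, ∑ j, c i j = 0 := by
      have he : ∑ i, ∑ j, c i j = (inner ℝ (∑ i, p i) (∑ j, p j) : ℝ) := by
        rw [sum_inner]
        exact Finset.sum_congr rfl fun i _ => (inner_sum _ _ _).symm
      rw [he, hcenter, inner_zero_left]
    have h1 : ∀ i : Fin (d+1), ∑ j ∈ univ.erase i, c i j = (∑ j, c i j) - ‖p i‖^2 := by
      intro i; rw [Finset.sum_erase_eq_sub (mem_univ i), hcc]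
    rw [Finset.sum_congr rfl (fun i (_ : i ∈ univ) => h1 i), Finset.sum_sub_distrib, h0, zero_sub]
  have e1 : ∑ i, (A:ℝ) * c i i = (A:ℝ) * ∑ i, ‖p i‖^2 := by
    rw [← Finset.mul_sum]
    congr 1
    exact Finset.sum_congr rfl fun i _ => hcc i
  have e2 : ∑ i, (B:ℝ) * ∑ j ∈ univ.erase i, c i j
      = (B:ℝ) * ∑ i, ∑ j ∈ univ.erase i, c i j := (Finset.mul_sum _ _ _).symm
  rw [e1, e2, htotal]
  have hAB : (A:ℝ) - (B:ℝ) = (Nat.choose (d-1) (m-1) : ℝ) := by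
    by_cases h2 : 2 ≤ m
    · have hnat : Nat.choose d (m-1) = Nat.choose (d-1) (m-2) + Nat.choose (d-1) (m-1) := by
        obtain ⟨a, rfl⟩ : ∃ a, m = a + 2 := ⟨m - 2, by omega⟩
        obtain ⟨e, he⟩ : ∃ e, d = e + 1 := ⟨d - 1, by omega⟩
        rw [he]
        show (e+1).choose (a+1) = e.choose a + e.choose (a+1)
        exact Nat.choose_succ_succ e a
      rw [hB, if_pos h2, hA, hnat]
      push_cast
      ring
    · have hm : m = 1 := by omega
      subst hm
      rw [hB, if_neg h2, hA]
      simp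
  calc (A:ℝ) * (∑ i, ‖p i‖^2) + (B:ℝ) * -(∑ i, ‖p i‖^2)
      = ((A:ℝ) - (B:ℝ)) * ∑ i, ‖p i‖^2 := by ring
    _ = (Nat.choose (d-1) (m-1) : ℝ) * ∑ i, ‖p i‖^2 := by rw [hAB]

end Slice

lemma choose_identity {d M K : ℕ} (hM : 1 ≤ M) (hMd : M ≤ d) (hK : K = d + 1 - M) :
    (Nat.choose (d+1) M : ℝ) * ((M:ℝ) * (K:ℝ))
      = (Nat.choose (d-1) (M-1) : ℝ) * (((d:ℝ)+1) * (d:ℝ)) := by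
  obtain ⟨a, rfl⟩ : ∃ a, M = a + 1 := ⟨M-1, by omega⟩
  obtain ⟨b, rfl⟩ : ∃ b, d = a + b + 1 := ⟨d - a - 1, by omega⟩
  obtain rfl : K = b + 1 := by omega
  have f1 : ((a+b+2) * Nat.choose (a+b+1) a : ℝ)
      = (Nat.choose (a+b+2) (a+1) : ℝ) * ((a:ℝ)+1) := by
    exact_mod_cast congrArg (Nat.cast (R := ℝ)) (Nat.add_one_mul_choose_eq (a+b+1) a)
  have f2 : ((a+b+1) * Nat.choose (a+b) b : ℝ)
      = (Nat.choose (a+b+1) (b+1) : ℝ) * ((b:ℝ)+1) := by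
    exact_mod_cast congrArg (Nat.cast (R := ℝ)) (Nat.add_one_mul_choose_eq (a+b) b)
  have f3 : (Nat.choose (a+b+1) a : ℝ) = (Nat.choose (a+b+1) (b+1) : ℝ) := by
    have : Nat.choose (a+b+1) (a+b+1-a) = Nat.choose (a+b+1) a :=
      Nat.choose_symm (by omega)
    have h2 : a+b+1-a = b+1 := by omega
    rw [h2] at this
    exact_mod_cast congrArg (Nat.cast (R := ℝ)) this.symm
  have f4 : (Nat.choose (a+b) b : ℝ) = (Nat.choose (a+b) a : ℝ) := by
    have : Nat.choose (a+b) (a+b-a) = Nat.choose (a+b) a := Nat.choose_symm (by omega)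
    have h2 : a+b-a = b := by omega
    rw [h2] at this
    exact_mod_cast congrArg (Nat.cast (R := ℝ)) this
  have hd1 : a + b + 1 - 1 = a + b := by omega
  have hM1 : a + 1 - 1 = a := by omega
  rw [hd1, hM1]
  push_cast at f1 f2 f3 f4 ⊢
  linear_combination (-((b:ℝ)+1))*f1 + (((a:ℝ)+(b:ℝ)+2)*((b:ℝ)+1))*f3
    + (-((a:ℝ)+(b:ℝ)+2))*f2 + (((a:ℝ)+(b:ℝ)+2)*((a:ℝ)+(b:ℝ)+1))*f4

section Units
variable {d : ℕ} (p : Fin (d + 1) → EuclideanSpace ℝ (Fin d))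

lemma norm_sq_card (hd : 1 ≤ d) (hunit : ∀ i, ‖p i‖ = 1)
    (hinner : ∀ i j, i ≠ j → (inner ℝ (p i) (p j) : ℝ) = -1/d) (S : Finset (Fin (d+1))) :
    ‖∑ i ∈ S, p i‖^2 = (S.card : ℝ) * ((d:ℝ) + 1 - S.card) / d := by
  have hd0 : (d:ℝ) ≠ 0 := by positivity
  rw [norm_sq_sum_eq_double]
  have hrow : ∀ i ∈ S, ∑ j ∈ S, (inner ℝ (p i) (p j) : ℝ)
      = 1 + ((S.card : ℝ) - 1) * (-1/d) := by
    intro i hi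
    rw [← Finset.add_sum_erase _ _ hi, real_inner_self_eq_norm_sq, hunit i, one_pow]
    congr 1
    rw [Finset.sum_congr rfl (fun j hj => hinner i j (Finset.ne_of_mem_erase hj).symm),
      Finset.sum_const, Finset.card_erase_of_mem hi, nsmul_eq_mul]
    congr 1
    have h1 : 1 ≤ S.card := Finset.card_pos.2 ⟨i, hi⟩
    push_cast [h1]
    ring
  rw [Finset.sum_congr rfl hrow, Finset.sum_const, nsmul_eq_mul]
  field_simp
  ring_nf

end Units

lemma card_prod_le {d M K s : ℕ} (hM : M = (d+1)/2) (hK : K = d+1-M) (hs : s ≤ d+1) :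
    (s:ℝ) * ((d:ℝ)+1-s) ≤ (M:ℝ)*(K:ℝ) := by
  have h1 : M ≤ K := by omega
  have h2 : K ≤ M + 1 := by omega
  have h3 : M + K = d + 1 := by omega
  have hc3 : (M:ℝ) + (K:ℝ) = (d:ℝ) + 1 := by exact_mod_cast h3
  rcases le_or_gt s M with h | h
  · have f1 : (s:ℝ) ≤ M := by exact_mod_cast h
    have f2 : (s:ℝ) ≤ K := by
      have : s ≤ K := le_trans h h1
      exact_mod_cast this
    nlinarith [mul_nonneg (sub_nonneg.2 f1) (sub_nonneg.2 f2)]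
  · have f1 : (M:ℝ) + 1 ≤ s := by exact_mod_cast h
    have f2 : (K:ℝ) ≤ s := by
      have : K ≤ s := by omega
      exact_mod_cast this
    nlinarith [mul_nonneg (by linarith : (0:ℝ) ≤ (s:ℝ) - M) (by linarith : (0:ℝ) ≤ (s:ℝ) - K)]

set_option maxHeartbeats 2000000 in
/-- Let `d ≥ 2` and let `p₁, …, p_{d+1} ∈ ℝ^d` satisfy `∑ᵢ pᵢ = 0` (centered
canonical form) and `∑ᵢ ‖pᵢ‖ = d+1` (the mean width of the regular rhombic dodecahedron with
unit generators). Then the circumradius `(1/2) max {‖∑ εᵢ pᵢ‖ : εᵢ ∈ {-1,1}}` is at least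
`√(d+2)/2` for even `d` and at least `(d+1)/(2√d)` for odd `d`, with equality if and only if
all the `pᵢ` are unit vectors with `⟨pᵢ, pⱼ⟩ = -1/d` for `i ≠ j`, i.e. the zonotope
`∑ᵢ [0, pᵢ]` is a regular rhombic dodecahedron. -/
theorem centered_rhombic_dodecahedron_circumradius_ge (d : ℕ) (hd : 2 ≤ d)
    (p : Fin (d + 1) → EuclideanSpace ℝ (Fin d))
    (hcenter : ∑ i, p i = 0) (hw : ∑ i, ‖p i‖ = (d : ℝ) + 1) :
    (if Even d then Real.sqrt ((d : ℝ) + 2) / 2 else ((d : ℝ) + 1) / (2 * Real.sqrt d)) ≤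
      (1 / 2) * signMax p ∧
    ((1 / 2) * signMax p =
        (if Even d then Real.sqrt ((d : ℝ) + 2) / 2 else ((d : ℝ) + 1) / (2 * Real.sqrt d)) ↔
      (∀ i, ‖p i‖ = 1) ∧ ∀ i j, i ≠ j → (inner ℝ (p i) (p j) : ℝ) = -1 / d) := by
  classical
  set M : ℕ := (d+1)/2 with hM
  set K : ℕ := d + 1 - M with hK
  have hM1 : 1 ≤ M := by omega
  have hMd : M ≤ d - 1 := by omega
  have hMd' : M ≤ d := by omega
  have hdpos : (0:ℝ) < d := by
    have : 0 < d := by omega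
    exact_mod_cast this
  set Bq : ℝ := 4 * M * K / d with hBq
  have hBqnn : 0 ≤ Bq := by positivity
  -- the target bound is √Bq / 2
  have hb2 : (if Even d then Real.sqrt ((d : ℝ) + 2) / 2
      else ((d : ℝ) + 1) / (2 * Real.sqrt d)) = Real.sqrt Bq / 2 := by
    rcases Nat.even_or_odd d with he | ho
    · obtain ⟨k, hk⟩ := he
      have h2M : 2 * M = d := by omega
      have hKM : K = M + 1 := by omega
      have hr1 : 2*(M:ℝ) = d := by exact_mod_cast h2M
      have hr2 : (K:ℝ) = (M:ℝ) + 1 := by exact_mod_cast hKM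
      rw [if_pos ⟨k, hk⟩]
      have hBqv : Bq = (d:ℝ) + 2 := by
        rw [hBq]
        rw [div_eq_iff (ne_of_gt hdpos), hr2, ← hr1]
        ring
      rw [hBqv]
    · obtain ⟨k, hk⟩ := id ho
      have h2M : 2 * M = d + 1 := by omega
      have hKM : K = M := by omega
      have hr1 : 2*(M:ℝ) = (d:ℝ) + 1 := by exact_mod_cast h2M
      have hr2 : (K:ℝ) = (M:ℝ) := by exact_mod_cast hKM
      rw [if_neg (Nat.not_even_iff_odd.mpr ho)]
      have hBqv : Bq = ((d:ℝ)+1)^2 / d := by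
        rw [hBq]
        congr 1
        rw [hr2, ← hr1]
        ring
      rw [hBqv]
      have hsd : (0:ℝ) < Real.sqrt d := Real.sqrt_pos.2 hdpos
      rw [Real.sqrt_div (sq_nonneg _), Real.sqrt_sq (by positivity : (0:ℝ) ≤ (d:ℝ)+1)]
      rw [eq_div_iff (by norm_num : (2:ℝ) ≠ 0), div_mul_eq_mul_div, div_eq_div_iff
        (by positivity) (ne_of_gt hsd)]
      ring
  rw [hb2]
  -- basic quantities
  set T : ℝ := ∑ i, ‖p i‖^2 with hT
  have hexp : ∑ i, (‖p i‖ - 1)^2 = T - ((d:ℝ)+1) := by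
    have h1 : ∀ i : Fin (d+1), (‖p i‖ - 1)^2 = ‖p i‖^2 - 2*‖p i‖ + 1 := fun i => by ring
    rw [Finset.sum_congr rfl (fun i _ => h1 i)]
    rw [Finset.sum_add_distrib, Finset.sum_sub_distrib, ← Finset.mul_sum, hw,
      Finset.sum_const, card_univ, Fintype.card_fin, nsmul_eq_mul, mul_one]
    push_cast
    ring
  have hTn : (d:ℝ)+1 ≤ T := by
    have h := Finset.sum_nonneg (fun i (_ : i ∈ (univ : Finset (Fin (d+1)))) =>
      sq_nonneg (‖p i‖ - 1))
    linarith [hexp]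
  have hslice := slice_sum p hcenter (m := M) hM1 hMd'
  have hchoose := choose_identity (d := d) hM1 hMd' hK
  have hCpos : (0:ℝ) < (Nat.choose (d-1) (M-1) : ℝ) := by
    have : 0 < Nat.choose (d-1) (M-1) := Nat.choose_pos (by omega)
    exact_mod_cast this
  have hbin : (Nat.choose (d+1) M : ℝ) * Bq
      = 4 * ((d:ℝ)+1) * (Nat.choose (d-1) (M-1) : ℝ) := by
    rw [hBq]
    field_simp
    linear_combination hchoose
  -- the inequality
  have hkey : Real.sqrt Bq ≤ signMax p := by
    have hne : ((univ : Finset (Fin (d+1))).powersetCard M).Nonempty := by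
      apply Finset.powersetCard_nonempty.2
      rw [card_univ, Fintype.card_fin]
      omega
    have hsum_le : ∑ _S ∈ (univ : Finset (Fin (d+1))).powersetCard M, (Bq/4)
        ≤ ∑ S ∈ (univ : Finset (Fin (d+1))).powersetCard M, ‖∑ i ∈ S, p i‖^2 := by
      rw [hslice, Finset.sum_const, Finset.card_powersetCard, card_univ, Fintype.card_fin,
        nsmul_eq_mul]
      have h1 : (Nat.choose (d+1) M : ℝ) * (Bq/4)
          = ((d:ℝ)+1) * (Nat.choose (d-1) (M-1) : ℝ) := by linarith [hbin]
      rw [h1]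
      rw [← hT]
      nlinarith [hCpos, hTn]
    obtain ⟨S, hS, hSle⟩ := Finset.exists_le_of_sum_le hne hsum_le
    have h2 : Real.sqrt Bq ≤ 2*‖∑ i ∈ S, p i‖ := by
      have hnn : (0:ℝ) ≤ 2*‖∑ i ∈ S, p i‖ :=
        mul_nonneg (by norm_num) (norm_nonneg _)
      have hsq : Bq ≤ (2*‖∑ i ∈ S, p i‖)^2 := by nlinarith [hSle]
      calc Real.sqrt Bq ≤ Real.sqrt ((2*‖∑ i ∈ S, p i‖)^2) := Real.sqrt_le_sqrt hsq
        _ = 2*‖∑ i ∈ S, p i‖ := Real.sqrt_sq hnn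
    exact h2.trans (two_norm_le_signMax p hcenter S)
  refine ⟨by linarith, ?_⟩
  constructor
  · -- equality implies rigidity
    intro heq
    have hsm : signMax p = Real.sqrt Bq := by linarith
    have hub : ∀ S : Finset (Fin (d+1)), ‖∑ i ∈ S, p i‖^2 ≤ Bq/4 := by
      intro S
      have h1 := two_norm_le_signMax p hcenter S
      rw [hsm] at h1
      have h2 := Real.sq_sqrt hBqnn
      nlinarith [norm_nonneg (∑ i ∈ S, p i)]
    have hsum_ub : (Nat.choose (d-1) (M-1) : ℝ) * T
        ≤ ((d:ℝ)+1) * (Nat.choose (d-1) (M-1) : ℝ) := by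
      have h3 : ∑ S ∈ (univ : Finset (Fin (d+1))).powersetCard M, ‖∑ i ∈ S, p i‖^2
          ≤ ∑ _S ∈ (univ : Finset (Fin (d+1))).powersetCard M, (Bq/4) :=
        Finset.sum_le_sum (fun S _ => hub S)
      rw [hslice, ← hT, Finset.sum_const, Finset.card_powersetCard, card_univ,
        Fintype.card_fin, nsmul_eq_mul] at h3
      have h4 : (Nat.choose (d+1) M : ℝ) * (Bq/4)
          = ((d:ℝ)+1) * (Nat.choose (d-1) (M-1):ℝ) := by linarith [hbin]
      linarith [h3, h4]
    have hTeq : T = (d:ℝ)+1 := by nlinarith [hCpos, hTn, hsum_ub]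
    have hunit : ∀ i, ‖p i‖ = 1 := by
      intro i
      have h5 : ∑ i, (‖p i‖ - 1)^2 = 0 := by rw [hexp, hTeq]; ring
      have h6 := (Finset.sum_eq_zero_iff_of_nonneg
        (fun j (_ : j ∈ (univ : Finset (Fin (d+1)))) => sq_nonneg (‖p j‖ - 1))).1 h5 i (mem_univ i)
      have h7 : ‖p i‖ - 1 = 0 := by
        exact pow_eq_zero_iff (by norm_num) |>.1 h6
      linarith
    refine ⟨hunit, ?_⟩
    have hall : ∀ S : Finset (Fin (d+1)), S.card = M → ‖∑ i ∈ S, p i‖^2 = Bq/4 := by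
      have hsum_eq : ∑ S ∈ (univ : Finset (Fin (d+1))).powersetCard M, ‖∑ i ∈ S, p i‖^2
          = ∑ _S ∈ (univ : Finset (Fin (d+1))).powersetCard M, (Bq/4) := by
        rw [hslice, ← hT, hTeq, Finset.sum_const, Finset.card_powersetCard, card_univ,
          Fintype.card_fin, nsmul_eq_mul]
        linarith [hbin]
      intro S hScard
      exact (Finset.sum_eq_sum_iff_of_le (fun S _ => hub S)).1 hsum_eq S
        (Finset.mem_powersetCard.2 ⟨Finset.subset_univ S, hScard⟩)
    intro i j hij
    rcases eq_or_lt_of_le hd with hd2 | hd3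
    · -- case d = 2
      have hd2' : d = 2 := hd2.symm
      have hcard3 : Fintype.card (Fin (d+1)) = 3 := by rw [Fintype.card_fin, hd2']
      have hij2 : ({i,j} : Finset (Fin (d+1))).card = 2 := by
        rw [Finset.card_insert_of_notMem (by simpa using hij), Finset.card_singleton]
      have hcompl : (({i,j}ᶜ : Finset (Fin (d+1)))).Nonempty := by
        rw [← Finset.card_pos, Finset.card_compl, hij2, hcard3]
        norm_num
      obtain ⟨k, hk⟩ := hcompl
      have hk' : ¬(k = i ∨ k = j) := by simpa using hk
      have hki : k ≠ i := fun h => hk' (Or.inl h)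
      have hkj : k ≠ j := fun h => hk' (Or.inr h)
      have huniv : ({i,j,k} : Finset (Fin (d+1))) = univ := by
        apply Finset.eq_univ_of_card
        rw [hcard3]
        rw [Finset.card_insert_of_notMem (by simp [hij, hki.symm]),
          Finset.card_insert_of_notMem (by simp [hkj.symm]), Finset.card_singleton]
      have hsum3 : p i + (p j + p k) = 0 := by
        calc p i + (p j + p k)
            = ∑ x ∈ ({i,j,k} : Finset (Fin (d+1))), p x := by
              rw [Finset.sum_insert (by simp [hij, hki.symm]),
                Finset.sum_insert (by simp [hkj.symm]), Finset.sum_singleton]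
          _ = ∑ x, p x := by rw [huniv]
          _ = 0 := hcenter
      have hpk : p i + p j = -(p k) := by
        apply add_eq_zero_iff_eq_neg.1
        rw [← hsum3]
        exact (add_assoc _ _ _)
      have h1 : ‖p i + p j‖^2 = 1 := by
        rw [hpk, norm_neg, hunit k]
        norm_num
      have h2 := norm_add_sq_real (p i) (p j)
      rw [hunit i, hunit j, h1, one_pow] at h2
      have h3 : (inner ℝ (p i) (p j) : ℝ) = -1/2 := by linarith [h2]
      rw [h3, hd2']
      norm_num
    · -- case d ≥ 3
      have hM2 : 2 ≤ M := by omega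
      have hRstep : ∀ (a b : Fin (d+1)), ∀ R : Finset (Fin (d+1)), a ∉ R → b ∉ R →
          R.card = M - 1 →
          (inner ℝ (p a) (∑ x ∈ R, p x) : ℝ) = inner ℝ (p b) (∑ x ∈ R, p x) := by
        intro a b R haR hbR hcard
        have h1 : ‖∑ x ∈ insert a R, p x‖^2 = Bq/4 :=
          hall _ (by rw [Finset.card_insert_of_notMem haR, hcard]; omega)
        have h2 : ‖∑ x ∈ insert b R, p x‖^2 = Bq/4 :=
          hall _ (by rw [Finset.card_insert_of_notMem hbR, hcard]; omega)
        rw [Finset.sum_insert haR, norm_add_sq_real, hunit a, one_pow] at h1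
        rw [Finset.sum_insert hbR, norm_add_sq_real, hunit b, one_pow] at h2
        linarith [h1, h2]
      have horth : ∀ (i' k' : Fin (d+1)), i' ≠ k' → ∀ a, a ≠ i' → a ≠ k' →
          (inner ℝ (p i') (p a) : ℝ) = inner ℝ (p k') (p a) := by
        intro i' k' hik a hai hak
        have hUcard : (({i',k'}ᶜ : Finset (Fin (d+1)))).card = d - 1 := by
          rw [Finset.card_compl, Fintype.card_fin,
            Finset.card_insert_of_notMem (by simpa using hik), Finset.card_singleton]
          omega
        have haU : a ∈ ({i',k'}ᶜ : Finset (Fin (d+1))) := by simp [hai, hak]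
        have hveq : ∀ b ∈ ({i',k'}ᶜ : Finset (Fin (d+1))),
            (inner ℝ (p i') (p b) : ℝ) - inner ℝ (p k') (p b)
              = (inner ℝ (p i') (p a) : ℝ) - inner ℝ (p k') (p a) := by
          intro b hbU
          rcases eq_or_ne b a with rfl | hba
          · rfl
          · have hb' : ¬(b = i' ∨ b = k') := by simpa using hbU
            have hbi : b ≠ i' := fun h => hb' (Or.inl h)
            have hbk : b ≠ k' := fun h => hb' (Or.inr h)
            have hcompl4 : (({i',k',a,b}ᶜ : Finset (Fin (d+1)))).card = d - 3 := by
              rw [Finset.card_compl, Fintype.card_fin]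
              have hc4 : ({i',k',a,b} : Finset (Fin (d+1))).card = 4 := by
                rw [Finset.card_insert_of_notMem (by simp [hik, hai.symm, hbi.symm]),
                  Finset.card_insert_of_notMem (by simp [hak.symm, hbk.symm]),
                  Finset.card_insert_of_notMem (by simp [hba.symm]),
                  Finset.card_singleton]
              rw [hc4]
              omega
            obtain ⟨Q, hQsub, hQcard⟩ := Finset.exists_subset_card_eq
              (show M - 2 ≤ (({i',k',a,b}ᶜ : Finset (Fin (d+1)))).card by
                rw [hcompl4]; omega)
            have hQ : ∀ x ∈ Q, ¬(x = i' ∨ x = k' ∨ x = a ∨ x = b) := by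
              intro x hx
              simpa using hQsub hx
            have haQ : a ∉ Q := fun h => hQ a h (Or.inr (Or.inr (Or.inl rfl)))
            have hbQ : b ∉ Q := fun h => hQ b h (Or.inr (Or.inr (Or.inr rfl)))
            have hiaQ : i' ∉ insert a Q := by
              simp only [Finset.mem_insert]
              rintro (h | h)
              · exact hai h.symm
              · exact hQ i' h (Or.inl rfl)
            have hkaQ : k' ∉ insert a Q := by
              simp only [Finset.mem_insert]
              rintro (h | h)
              · exact hak h.symm
              · exact hQ k' h (Or.inr (Or.inl rfl))
            have hibQ : i' ∉ insert b Q := by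
              simp only [Finset.mem_insert]
              rintro (h | h)
              · exact hbi h.symm
              · exact hQ i' h (Or.inl rfl)
            have hkbQ : k' ∉ insert b Q := by
              simp only [Finset.mem_insert]
              rintro (h | h)
              · exact hbk h.symm
              · exact hQ k' h (Or.inr (Or.inl rfl))
            have e1 := hRstep i' k' (insert a Q) hiaQ hkaQ
              (by rw [Finset.card_insert_of_notMem haQ, hQcard]; omega)
            have e2 := hRstep i' k' (insert b Q) hibQ hkbQ
              (by rw [Finset.card_insert_of_notMem hbQ, hQcard]; omega)
            rw [Finset.sum_insert haQ, inner_add_right, inner_add_right] at e1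
            rw [Finset.sum_insert hbQ, inner_add_right, inner_add_right] at e2
            linarith [e1, e2]
        have hUsum : ∑ b ∈ ({i',k'}ᶜ : Finset (Fin (d+1))),
            ((inner ℝ (p i') (p b) : ℝ) - inner ℝ (p k') (p b)) = 0 := by
          have hsU : ∑ b ∈ ({i',k'}ᶜ : Finset (Fin (d+1))), p b = -(p i' + p k') := by
            apply add_eq_zero_iff_eq_neg.1
            have h9 := Finset.sum_compl_add_sum ({i',k'} : Finset (Fin (d+1))) p
            rw [Finset.sum_pair hik, hcenter] at h9
            exact h9
          have h10 : ∑ b ∈ ({i',k'}ᶜ : Finset (Fin (d+1))),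
              ((inner ℝ (p i') (p b):ℝ) - inner ℝ (p k') (p b))
              = (inner ℝ (p i') (∑ b ∈ ({i',k'}ᶜ : Finset (Fin (d+1))), p b) : ℝ)
                - inner ℝ (p k') (∑ b ∈ ({i',k'}ᶜ : Finset (Fin (d+1))), p b) := by
            rw [inner_sum, inner_sum, ← Finset.sum_sub_distrib]
          rw [h10, hsU, inner_neg_right, inner_neg_right, inner_add_right, inner_add_right,
            real_inner_self_eq_norm_sq, real_inner_self_eq_norm_sq, hunit i', hunit k',
            real_inner_comm (p i') (p k')]
          ring
        rw [Finset.sum_congr rfl hveq, Finset.sum_const, hUcard, nsmul_eq_mul] at hUsum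
        have hd1pos : (0:ℝ) < ((d-1 : ℕ):ℝ) := by
          have : 0 < d - 1 := by omega
          exact_mod_cast this
        have hv0 := (mul_eq_zero.1 hUsum).resolve_left (ne_of_gt hd1pos)
        linarith [hv0]
      have h0 : ∑ x, (inner ℝ (p j) (p x) : ℝ) = 0 := by
        rw [← inner_sum, hcenter, inner_zero_right]
      have hconstj : ∀ x ∈ univ.erase j, (inner ℝ (p j) (p x):ℝ) = inner ℝ (p i) (p j) := by
        intro x hx
        have hxj : x ≠ j := Finset.ne_of_mem_erase hx
        rcases eq_or_ne x i with rfl | hxi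
        · exact real_inner_comm _ _
        · rw [real_inner_comm]
          exact horth x i hxi j hxj.symm hij.symm
      rw [← Finset.add_sum_erase _ _ (mem_univ j), Finset.sum_congr rfl hconstj,
        Finset.sum_const, Finset.card_erase_of_mem (mem_univ j), card_univ, Fintype.card_fin,
        nsmul_eq_mul, real_inner_self_eq_norm_sq, hunit j, one_pow] at h0
      have hdd : ((d+1-1 : ℕ):ℝ) = (d:ℝ) := by norm_num
      rw [hdd] at h0
      have hfin : (inner ℝ (p i) (p j) : ℝ) = -1/(d:ℝ) := by
        rw [eq_div_iff (ne_of_gt hdpos)]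
        linarith [h0]
      exact hfin
  · -- rigidity implies equality
    rintro ⟨hunit, hinner⟩
    have hval : ∀ S : Finset (Fin (d+1)), 2*‖∑ i ∈ S, p i‖ ≤ Real.sqrt Bq := by
      intro S
      have h1 : ‖∑ i ∈ S, p i‖^2 = (S.card : ℝ) * ((d:ℝ) + 1 - S.card) / d :=
        norm_sq_card p (by omega) hunit hinner S
      have h2 : (S.card:ℝ)*((d:ℝ)+1-S.card) ≤ (M:ℝ)*(K:ℝ) := by
        apply card_prod_le hM hK
        calc S.card ≤ (univ : Finset (Fin (d+1))).card := Finset.card_le_univ S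
          _ = d+1 := by rw [card_univ, Fintype.card_fin]
      have h3 : ‖∑ i ∈ S, p i‖^2 ≤ Bq/4 := by
        rw [h1, hBq]
        have h5 : 4*(M:ℝ)*(K:ℝ)/(d:ℝ)/4 = (M:ℝ)*(K:ℝ)/(d:ℝ) := by ring
        rw [h5, div_le_div_iff₀ hdpos hdpos]
        nlinarith [h2, hdpos.le]
      have hnn : (0:ℝ) ≤ 2*‖∑ i ∈ S, p i‖ :=
        mul_nonneg (by norm_num) (norm_nonneg _)
      have h8 : (2*‖∑ i ∈ S, p i‖)^2 ≤ Bq := by nlinarith [h3]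
      calc 2*‖∑ i ∈ S, p i‖ = Real.sqrt ((2*‖∑ i ∈ S, p i‖)^2) := (Real.sqrt_sq hnn).symm
        _ ≤ Real.sqrt Bq := Real.sqrt_le_sqrt h8
    have hattain : ∃ S : Finset (Fin (d+1)), 2*‖∑ i ∈ S, p i‖ = Real.sqrt Bq := by
      obtain ⟨S, _hSsub, hScard⟩ := Finset.exists_subset_card_eq
        (show M ≤ (univ : Finset (Fin (d+1))).card by rw [card_univ, Fintype.card_fin]; omega)
      refine ⟨S, ?_⟩
      have h1 : ‖∑ i ∈ S, p i‖^2 = (M : ℝ) * ((d:ℝ) + 1 - M) / d := by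
        rw [norm_sq_card p (by omega) hunit hinner S, hScard]
      have hKd : (d:ℝ) + 1 - (M:ℝ) = (K:ℝ) := by
        have h6 : M + K = d + 1 := by omega
        have h7 : (M:ℝ) + (K:ℝ) = (d:ℝ) + 1 := by exact_mod_cast h6
        linarith
      have h2 : (2*‖∑ i ∈ S, p i‖)^2 = Bq := by
        rw [mul_pow, h1, hKd, hBq]
        ring
      calc 2*‖∑ i ∈ S, p i‖ = Real.sqrt ((2*‖∑ i ∈ S, p i‖)^2) :=
            (Real.sqrt_sq (mul_nonneg (by norm_num) (norm_nonneg _))).symm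
        _ = Real.sqrt Bq := by rw [h2]
    have hsm : signMax p = Real.sqrt Bq := by
      rw [signMax_eq p hcenter]
      apply IsGreatest.csSup_eq
      constructor
      · obtain ⟨S, hS⟩ := hattain
        exact ⟨S, hS⟩
      · rintro r ⟨S, rfl⟩
        exact hval S
    rw [hsm]
    ring
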